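/- For an integer $b \geq 3$, the Newhouse thickness of the set $\mathcal{C}_{b,0} := \{x \in [0,1] : x = \sum_{i<0} c_i b^i, \ c_i \in \{1,\dots,b-1\}\}$ equals $b-2$. -/

import Mathlib

set_option maxHeartbeats 1000000

/-- Newhouse thickness of a compact set `C ⊆ ℝ`: for each bounded gap `(a,b)` of `C`,
the left piece extends from `a` leftwards to the nearest right-endpoint of a gap of
length at least `b - a` (or to `sInf C`), similarly for the right piece; the thickness
is the infimum over all gaps of `min |L| |R| / |G|`. -/
noncomputable def thickness (C : Set ℝ) : ℝ :=
  sInf { t : ℝ | ∃ a b : ℝ, a ∈ C ∧ b ∈ C ∧ a < b ∧ Set.Ioo a b ∩ C = ∅ ∧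
    t = min
      (a - sSup (insert (sInf C)
        {d : ℝ | ∃ c : ℝ, c ∈ C ∧ d ∈ C ∧ c < d ∧ d ≤ a ∧ b - a ≤ d - c ∧ Set.Ioo c d ∩ C = ∅}))
      (sInf (insert (sSup C)
        {c : ℝ | ∃ d : ℝ, c ∈ C ∧ d ∈ C ∧ c < d ∧ b ≤ c ∧ b - a ≤ d - c ∧ Set.Ioo c d ∩ C = ∅}) - b)
      / (b - a) }


/-- The set of reals in `[0,1]` admitting a base-`b` expansion omitting the digit `0`,
i.e. `x = ∑_{i<0} cᵢ bⁱ` with all digits `cᵢ ∈ {1, …, b-1}`. -/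
noncomputable def Cb0 (b : ℕ) : Set ℝ :=
  {x : ℝ | x ∈ Set.Icc (0 : ℝ) 1 ∧ ∃ c : ℕ → ℕ, (∀ i, 1 ≤ c i ∧ c i ≤ b - 1) ∧
    x = ∑' i : ℕ, (c i : ℝ) / (b : ℝ) ^ (i + 1)}

open Set

namespace CbAux

variable {b : ℕ}

noncomputable def gp (b : ℕ) : ℝ := (((b:ℝ) - 1) * b)⁻¹
noncomputable def Lp (b j : ℕ) : ℝ := ((j:ℝ) + ((b:ℝ) - 1)⁻¹) / b
def IsGap (C : Set ℝ) (a β : ℝ) : Prop :=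
  a ∈ C ∧ β ∈ C ∧ a < β ∧ Set.Ioo a β ∩ C = ∅

def Dset (C : Set ℝ) (a β : ℝ) : Set ℝ :=
  {d : ℝ | ∃ c : ℝ, c ∈ C ∧ d ∈ C ∧ c < d ∧ d ≤ a ∧ β - a ≤ d - c ∧ Set.Ioo c d ∩ C = ∅}
def Eset (C : Set ℝ) (a β : ℝ) : Set ℝ :=
  {c : ℝ | ∃ d : ℝ, c ∈ C ∧ d ∈ C ∧ c < d ∧ β ≤ c ∧ β - a ≤ d - c ∧ Set.Ioo c d ∩ C = ∅}


lemma hB1 (hb : 3 ≤ b) : (1:ℝ) < (b:ℝ) := by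
  have : (3:ℝ) ≤ (b:ℝ) := by exact_mod_cast hb
  linarith

lemma pow_eq (hb : 3 ≤ b) (k : ℝ) (i : ℕ) :
    k / (b:ℝ) ^ (i+1) = (k * (1/(b:ℝ))) * (1/(b:ℝ)) ^ i := by
  have hB := hB1 hb
  have hbne : (b:ℝ) ≠ 0 := by linarith
  rw [one_div, inv_pow, pow_succ, div_eq_mul_inv, mul_inv]
  ring

lemma summable_geom (hb : 3 ≤ b) : Summable (fun i : ℕ => ((b:ℝ) - 1) / (b:ℝ) ^ (i+1)) := by
  have hB := hB1 hb
  have h0 : (0:ℝ) ≤ 1 / (b:ℝ) := by positivity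
  have h1 : 1 / (b:ℝ) < 1 := by rw [div_lt_one (by linarith)]; linarith
  have hs : Summable (fun i : ℕ => (1/(b:ℝ)) ^ i) := summable_geometric_of_lt_one h0 h1
  exact (hs.mul_left (((b:ℝ) - 1) * (1/(b:ℝ)))).congr fun i => (pow_eq hb _ i).symm

lemma cast_digit_le (hb : 3 ≤ b) {k : ℕ} (hk : k ≤ b - 1) : (k : ℝ) ≤ (b:ℝ) - 1 := by
  have h : ((k : ℕ) : ℝ) ≤ ((b - 1 : ℕ) : ℝ) := by exact_mod_cast hk
  have hb1 : (1:ℕ) ≤ b := by omega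
  rwa [Nat.cast_sub hb1, Nat.cast_one] at h

lemma summable_digits (hb : 3 ≤ b) (c : ℕ → ℕ) (hc : ∀ i, c i ≤ b - 1) :
    Summable (fun i : ℕ => (c i : ℝ) / (b:ℝ) ^ (i+1)) := by
  have hB := hB1 hb
  refine (summable_geom hb).of_nonneg_of_le (fun i => by positivity) (fun i => ?_)
  have := cast_digit_le hb (hc i)
  gcongr

lemma tsum_const_digit (hb : 3 ≤ b) (k : ℕ) :
    ∑' i : ℕ, (k : ℝ) / (b:ℝ) ^ (i+1) = (k:ℝ) / ((b:ℝ) - 1) := by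
  have hB := hB1 hb
  have h0 : (0:ℝ) ≤ 1 / (b:ℝ) := by positivity
  have h1 : 1 / (b:ℝ) < 1 := by rw [div_lt_one (by linarith)]; linarith
  have hgeo : ∑' i : ℕ, (1/(b:ℝ)) ^ i = (1 - 1/(b:ℝ))⁻¹ := tsum_geometric_of_lt_one h0 h1
  have hbne : (b:ℝ) ≠ 0 := by linarith
  calc ∑' i : ℕ, (k : ℝ) / (b:ℝ) ^ (i+1)
      = ∑' i : ℕ, ((k:ℝ) * (1/(b:ℝ))) * (1/(b:ℝ)) ^ i := tsum_congr fun i => pow_eq hb _ i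
    _ = ((k:ℝ) * (1/(b:ℝ))) * (1 - 1/(b:ℝ))⁻¹ := by rw [tsum_mul_left, hgeo]
    _ = (k:ℝ) / ((b:ℝ) - 1) := by
        have h2 : 1 - 1/(b:ℝ) = ((b:ℝ)-1)/b := by field_simp
        rw [h2, inv_div, eq_div_iff (by linarith : (b:ℝ) - 1 ≠ 0)]
        have h3 : ((b:ℝ) - 1) ≠ 0 := by linarith
        field_simp


lemma shift (hb : 3 ≤ b) (c : ℕ → ℕ) (hc : ∀ i, c i ≤ b - 1) :
    ∑' i : ℕ, (c i : ℝ) / (b:ℝ) ^ (i+1)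
      = (c 0 : ℝ) / b + (1/(b:ℝ)) * ∑' i : ℕ, (c (i+1) : ℝ) / (b:ℝ) ^ (i+1) := by
  have hB := hB1 hb
  have hbne : (b:ℝ) ≠ 0 := by linarith
  rw [Summable.tsum_eq_zero_add (summable_digits hb c hc)]
  congr 1
  · norm_num
  · rw [← tsum_mul_left]
    refine tsum_congr fun i => ?_
    rw [pow_succ ((b:ℝ)) (i+1), div_mul_eq_div_div]
    ring

lemma inv_mem (hb : 3 ≤ b) : ((b:ℝ) - 1)⁻¹ ∈ Cb0 b := by
  have hB := hB1 hb
  have hB3 : (3:ℝ) ≤ (b:ℝ) := by exact_mod_cast hb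
  refine ⟨⟨inv_nonneg.mpr (by linarith), ?_⟩, fun _ => 1,
    fun i => ⟨le_refl 1, show (1:ℕ) ≤ b - 1 by omega⟩, ?_⟩
  · rw [inv_le_one_iff₀]; right; linarith
  · have h := tsum_const_digit hb 1
    norm_num at h
    simp only [Nat.cast_one, one_div]
    exact h.symm

lemma one_mem (hb : 3 ≤ b) : (1:ℝ) ∈ Cb0 b := by
  have hB := hB1 hb
  refine ⟨⟨zero_le_one, le_refl 1⟩, fun _ => b - 1,
    fun i => ⟨show (1:ℕ) ≤ b - 1 by omega, le_refl _⟩, ?_⟩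
  rw [tsum_const_digit hb (b-1)]
  rw [Nat.cast_sub (by omega : (1:ℕ) ≤ b), Nat.cast_one]
  rw [div_self (by linarith : (b:ℝ) - 1 ≠ 0)]

lemma mem_lb (hb : 3 ≤ b) {x : ℝ} (hx : x ∈ Cb0 b) : ((b:ℝ) - 1)⁻¹ ≤ x := by
  have hB := hB1 hb
  obtain ⟨-, c, hc, rfl⟩ := hx
  have hs1 : Summable (fun i : ℕ => (1:ℝ) / (b:ℝ) ^ (i+1)) :=
    (summable_digits hb (fun _ => 1) (fun _ => show (1:ℕ) ≤ b - 1 by omega)).congr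
      (fun i => by norm_num)
  have h1 : ∑' i : ℕ, (1 : ℝ) / (b:ℝ) ^ (i+1) ≤ ∑' i : ℕ, (c i : ℝ) / (b:ℝ) ^ (i+1) := by
    refine hs1.tsum_le_tsum (fun i => ?_) (summable_digits hb c fun i => (hc i).2)
    have : (1:ℝ) ≤ (c i : ℝ) := by exact_mod_cast (hc i).1
    gcongr
  have h2 := tsum_const_digit hb 1
  norm_num at h2
  rw [← one_div]
  calc (1:ℝ)/((b:ℝ)-1) = ∑' i : ℕ, (1 : ℝ) / (b:ℝ) ^ (i+1) := by
        simp only [one_div]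
        exact h2.symm
    _ ≤ _ := h1

lemma mem_ub {x : ℝ} (hx : x ∈ Cb0 b) : x ≤ 1 := hx.1.2

lemma mem_nonneg {x : ℝ} (hx : x ∈ Cb0 b) : 0 ≤ x := hx.1.1

lemma scale_mem (hb : 3 ≤ b) {y : ℝ} (hy : y ∈ Cb0 b) {j : ℕ} (hj1 : 1 ≤ j) (hj2 : j ≤ b - 1) :
    (y + j) / b ∈ Cb0 b := by
  have hB := hB1 hb
  have hbne : (b:ℝ) ≠ 0 := by linarith
  obtain ⟨⟨hy0, hy1⟩, c, hc, hsum⟩ := hy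
  have hjR : (j:ℝ) ≤ (b:ℝ) - 1 := cast_digit_le hb hj2
  have hj0 : (1:ℝ) ≤ (j:ℝ) := by exact_mod_cast hj1
  refine ⟨⟨by positivity, ?_⟩, fun i => Nat.casesOn i j c, fun i => ?_, ?_⟩
  · rw [div_le_one (by linarith)]; linarith
  · cases i with
    | zero => exact ⟨hj1, hj2⟩
    | succ n => exact hc n
  · rw [shift hb _ (fun i => by cases i with | zero => exact hj2 | succ n => exact (hc n).2)]
    simp only []
    rw [← hsum]
    field_simp
    ring
    rfl

lemma decompose (hb : 3 ≤ b) {x : ℝ} (hx : x ∈ Cb0 b) :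
    ∃ j : ℕ, ∃ y : ℝ, 1 ≤ j ∧ j ≤ b - 1 ∧ y ∈ Cb0 b ∧ x = (y + j) / b := by
  have hB := hB1 hb
  have hbne : (b:ℝ) ≠ 0 := by linarith
  obtain ⟨⟨hx0, hx1⟩, c, hc, hsum⟩ := hx
  set y := ∑' i : ℕ, (c (i+1) : ℝ) / (b:ℝ) ^ (i+1) with hy
  have hysum := summable_digits hb (fun i => c (i+1)) (fun i => (hc (i+1)).2)
  have hy0 : 0 ≤ y := tsum_nonneg fun i => by positivity
  have hy1 : y ≤ 1 := by
    have h1 : y ≤ ∑' i : ℕ, ((b:ℝ) - 1) / (b:ℝ) ^ (i+1) := by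
      refine hysum.tsum_le_tsum (fun i => ?_) ?_
      · have := cast_digit_le hb (hc (i+1)).2
        gcongr
      · have := summable_digits hb (fun _ => b - 1) (fun _ => le_refl _)
        refine this.congr fun i => ?_
        rw [Nat.cast_sub (by omega : (1:ℕ) ≤ b), Nat.cast_one]
    have h2 : ∑' i : ℕ, ((b:ℝ) - 1) / (b:ℝ) ^ (i+1) = 1 := by
      have := tsum_const_digit hb (b - 1)
      rw [Nat.cast_sub (by omega : (1:ℕ) ≤ b), Nat.cast_one] at this
      rw [this, div_self (by linarith : (b:ℝ) - 1 ≠ 0)]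
    linarith
  refine ⟨c 0, y, (hc 0).1, (hc 0).2, ⟨⟨hy0, hy1⟩, fun i => c (i+1), fun i => hc (i+1), rfl⟩, ?_⟩
  rw [hsum, shift hb c (fun i => (hc i).2)]
  field_simp
  ring


lemma div_le_div_r {x y c : ℝ} (h : x ≤ y) (hc : 0 < c) : x/c ≤ y/c := by
  rw [div_le_div_iff₀ hc hc]; nlinarith

lemma div_lt_div_r {x y c : ℝ} (h : x < y) (hc : 0 < c) : x/c < y/c := by
  rw [div_lt_div_iff₀ hc hc]; nlinarith

lemma hB3 (hb : 3 ≤ b) : (3:ℝ) ≤ (b:ℝ) := by exact_mod_cast hb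

lemma gp_pos (hb : 3 ≤ b) : 0 < gp b := by
  have h := hB3 hb; rw [gp]; apply inv_pos.mpr; nlinarith

lemma Lp_eq (hb : 3 ≤ b) (j : ℕ) : Lp b j = (j:ℝ)/b + gp b := by
  have h := hB3 hb
  have h1 : ((b:ℝ) - 1) ≠ 0 := by linarith
  have h2 : (b:ℝ) ≠ 0 := by linarith
  rw [Lp, gp]
  field_simp

lemma Lp_one (hb : 3 ≤ b) : Lp b 1 = ((b:ℝ) - 1)⁻¹ := by
  have h := hB3 hb
  have h1 : ((b:ℝ) - 1) ≠ 0 := by linarith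
  have h2 : (b:ℝ) ≠ 0 := by linarith
  rw [Lp]
  field_simp
  ring

lemma gp_lt_invb (hb : 3 ≤ b) : gp b < 1/(b:ℝ) := by
  have h := hB3 hb
  rw [gp, inv_eq_one_div, div_lt_div_iff₀ (by nlinarith) (by linarith)]
  nlinarith

/-- the scaling map sends C-members into the j-th child interval -/
lemma scale_bounds (hb : 3 ≤ b) {y : ℝ} (hy : y ∈ Cb0 b) {j : ℕ} :
    Lp b j ≤ (y + j)/b ∧ (y + j)/b ≤ ((j:ℝ)+1)/b := by
  have h := hB3 hb
  have h1 := mem_lb hb hy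
  have h2 := mem_ub hy
  exact ⟨div_le_div_r (by linarith) (by linarith),
    div_le_div_r (by linarith) (by linarith)⟩

lemma Lp_mem (hb : 3 ≤ b) {j : ℕ} (hj1 : 1 ≤ j) (hj2 : j ≤ b - 1) : Lp b j ∈ Cb0 b := by
  have := scale_mem hb (inv_mem hb) hj1 hj2
  rw [Lp, add_comm ((j:ℝ)) (((b:ℝ)-1)⁻¹)]
  exact this

lemma right_mem (hb : 3 ≤ b) {j : ℕ} (hj1 : 1 ≤ j) (hj2 : j ≤ b - 1) :
    ((j:ℝ)+1)/b ∈ Cb0 b := by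
  have := scale_mem hb (one_mem hb) hj1 hj2
  rwa [add_comm] at this

lemma Lp_lt_Lp (hb : 3 ≤ b) {k j : ℕ} (h : k < j) : Lp b k < Lp b j := by
  have hB := hB3 hb
  have : (k:ℝ) < j := by exact_mod_cast h
  exact div_lt_div_r (by linarith) (by linarith)

lemma Lp_mono (hb : 3 ≤ b) {k j : ℕ} (h : k ≤ j) : Lp b k ≤ Lp b j := by
  rcases Nat.eq_or_lt_of_le h with h | h
  · rw [h]
  · exact (Lp_lt_Lp hb h).le

lemma right_lt_Lp_succ (hb : 3 ≤ b) (j : ℕ) : ((j:ℝ)+1)/b < Lp b (j+1) := by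
  have hB := hB3 hb
  have h0 : (0:ℝ) < ((b:ℝ)-1)⁻¹ := by apply inv_pos.mpr; linarith
  rw [Lp]
  push_cast
  exact div_lt_div_r (by linarith) (by linarith)

lemma Lp_succ_eq (hb : 3 ≤ b) (j : ℕ) : Lp b (j+1) = ((j:ℝ)+1)/b + gp b := by
  have h := Lp_eq hb (j+1)
  push_cast at h
  exact h

/-- localization: a member of C lying in the j-th child interval comes from C -/
lemma mem_child (hb : 3 ≤ b) {w : ℝ} (hw : w ∈ Cb0 b) {j : ℕ} (hj1 : 1 ≤ j) (hj2 : j ≤ b - 1)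
    (hlo : Lp b j ≤ w) (hhi : w ≤ ((j:ℝ)+1)/b) : ∃ y ∈ Cb0 b, w = (y + j)/b := by
  have hB := hB3 hb
  obtain ⟨k, y, hk1, hk2, hy, rfl⟩ := decompose hb hw
  rcases lt_trichotomy k j with hkj | hkj | hkj
  · exfalso
    have h1 : (y + k)/b ≤ ((k:ℝ)+1)/b := (scale_bounds hb hy).2
    have h2 : ((k:ℝ)+1)/b ≤ (j:ℝ)/b := by
      have : (k:ℝ)+1 ≤ j := by exact_mod_cast hkj
      exact div_le_div_r this (by linarith)
    have h3 : (j:ℝ)/b < Lp b j := by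
      rw [Lp_eq hb]
      have := gp_pos hb
      linarith
    linarith
  · exact ⟨y, hy, by rw [hkj]⟩
  · exfalso
    have h1 : Lp b k ≤ (y + k)/b := (scale_bounds hb hy).1
    have h2 : Lp b (j+1) ≤ Lp b k := Lp_mono hb hkj
    have h3 := right_lt_Lp_succ hb j
    linarith

lemma gap_scale (hb : 3 ≤ b) {a' β' : ℝ} (hg : IsGap (Cb0 b) a' β') {j : ℕ}
    (hj1 : 1 ≤ j) (hj2 : j ≤ b - 1) : IsGap (Cb0 b) ((a' + j)/b) ((β' + j)/b) := by
  have hB := hB3 hb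
  obtain ⟨ha, hβ, hab, hemp⟩ := hg
  refine ⟨scale_mem hb ha hj1 hj2, scale_mem hb hβ hj1 hj2,
    div_lt_div_r (by linarith) (by linarith), ?_⟩
  rw [eq_empty_iff_forall_notMem]
  rintro w ⟨⟨hw1, hw2⟩, hwC⟩
  have hlo : Lp b j ≤ w := le_trans (scale_bounds hb ha).1 hw1.le
  have hhi : w ≤ ((j:ℝ)+1)/b := le_trans hw2.le (scale_bounds hb hβ).2
  obtain ⟨y, hy, rfl⟩ := mem_child hb hwC hj1 hj2 hlo hhi
  have h1 : a' < y := by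
    rw [div_lt_div_iff₀ (by linarith) (by linarith)] at hw1
    nlinarith
  have h2 : y < β' := by
    rw [div_lt_div_iff₀ (by linarith) (by linarith)] at hw2
    nlinarith
  exact absurd (eq_empty_iff_forall_notMem.mp hemp y) (by simp [h1, h2, hy])

lemma top_gap (hb : 3 ≤ b) {j : ℕ} (hj1 : 1 ≤ j) (hj2 : j ≤ b - 2) :
    IsGap (Cb0 b) (((j:ℝ)+1)/b) (Lp b (j+1)) := by
  have hB := hB3 hb
  refine ⟨right_mem hb hj1 (by omega), Lp_mem hb (by omega) (by omega),
    right_lt_Lp_succ hb j, ?_⟩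
  rw [eq_empty_iff_forall_notMem]
  rintro w ⟨⟨hw1, hw2⟩, hwC⟩
  obtain ⟨k, y, hk1, hk2, hy, rfl⟩ := decompose hb hwC
  rcases le_or_gt k j with hkj | hkj
  · have h1 : (y + k)/b ≤ ((k:ℝ)+1)/b := (scale_bounds hb hy).2
    have h2 : ((k:ℝ)+1)/b ≤ ((j:ℝ)+1)/b := by
      have : (k:ℝ) ≤ j := by exact_mod_cast hkj
      exact div_le_div_r (by linarith) (by linarith)
    linarith
  · have h1 : Lp b k ≤ (y + k)/b := (scale_bounds hb hy).1
    have h2 : Lp b (j+1) ≤ Lp b k := Lp_mono hb hkj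
    linarith

lemma dichot (hb : 3 ≤ b) {a β : ℝ} (hg : IsGap (Cb0 b) a β) :
    (∃ j : ℕ, 1 ≤ j ∧ j ≤ b - 2 ∧ a = ((j:ℝ)+1)/b ∧ β = Lp b (j+1)) ∨
    (∃ j : ℕ, 1 ≤ j ∧ j ≤ b - 1 ∧ ∃ a' β' : ℝ, IsGap (Cb0 b) a' β' ∧
      a = (a' + j)/b ∧ β = (β' + j)/b) := by
  have hB := hB3 hb
  obtain ⟨ha, hβ, hab, hemp⟩ := hg
  obtain ⟨j, y, hj1, hj2, hy, rfl⟩ := decompose hb ha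
  obtain ⟨k, z, hk1, hk2, hz, rfl⟩ := decompose hb hβ
  have hempty := eq_empty_iff_forall_notMem.mp hemp
  rcases lt_trichotomy j k with hjk | hjk | hjk
  · -- top-level gap: endpoints forced
    left
    have hm1 : ((j:ℝ)+1)/b ∈ Cb0 b := right_mem hb hj1 hj2
    have ha1 : (y + j)/b ≤ ((j:ℝ)+1)/b := (scale_bounds hb hy).2
    have hLk : Lp b k ≤ (z + k)/b := (scale_bounds hb hz).1
    have hjk1 : Lp b (j+1) ≤ Lp b k := Lp_mono hb hjk
    have hb1 : ((j:ℝ)+1)/b < (z + k)/b :=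
      lt_of_lt_of_le (right_lt_Lp_succ hb j) (le_trans hjk1 hLk)
    have haeq : (y + j)/b = ((j:ℝ)+1)/b := by
      by_contra hne
      exact hempty _ ⟨⟨lt_of_le_of_ne ha1 hne, hb1⟩, hm1⟩
    have hm2 : Lp b k ∈ Cb0 b := Lp_mem hb (by omega) hk2
    have hbeq : (z + k)/b = Lp b k := by
      by_contra hne
      refine hempty _ ⟨⟨?_, lt_of_le_of_ne hLk (Ne.symm hne)⟩, hm2⟩
      rw [haeq]
      exact lt_of_lt_of_le (right_lt_Lp_succ hb j) hjk1
    have hkeq : k = j + 1 := by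
      by_contra hne
      have hk3 : j + 1 < k := by omega
      have hm3 : Lp b (j+1) ∈ Cb0 b := Lp_mem hb (by omega) (by omega)
      refine hempty _ ⟨⟨?_, ?_⟩, hm3⟩
      · rw [haeq]; exact right_lt_Lp_succ hb j
      · rw [hbeq]; exact Lp_lt_Lp hb hk3
    refine ⟨j, hj1, by omega, haeq, by rw [hbeq, hkeq]⟩
  · right
    refine ⟨j, hj1, hj2, y, z, ⟨hy, hz, ?_, ?_⟩, rfl, by rw [hjk]⟩
    · subst hjk
      rw [div_lt_div_iff₀ (by linarith) (by linarith)] at hab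
      nlinarith
    · subst hjk
      rw [eq_empty_iff_forall_notMem]
      rintro w ⟨⟨hw1, hw2⟩, hwC⟩
      exact hempty ((w + j)/b) ⟨⟨div_lt_div_r (by linarith) (by linarith),
        div_lt_div_r (by linarith) (by linarith)⟩, scale_mem hb hwC hj1 hj2⟩
  · exfalso
    have h1 : (z + k)/b ≤ ((k:ℝ)+1)/b := (scale_bounds hb hz).2
    have h2 : ((k:ℝ)+1)/b ≤ (j:ℝ)/b := by
      have : (k:ℝ)+1 ≤ j := by exact_mod_cast hjk
      exact div_le_div_r this (by linarith)
    have h3 : (j:ℝ)/b < Lp b j := by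
      rw [Lp_eq hb]; have := gp_pos hb; linarith
    have h4 : Lp b j ≤ (y+j)/b := (scale_bounds hb hy).1
    linarith


lemma gap_le_aux (hb : 3 ≤ b) (n : ℕ) :
    ∀ a β : ℝ, IsGap (Cb0 b) a β →
      β - a ≤ max (gp b) (((b:ℝ)-2)/(((b:ℝ)-1) * (b:ℝ)^n)) := by
  have hB := hB3 hb
  induction n with
  | zero =>
    intro a β hg
    have h1 := mem_lb hb hg.1
    have h2 := mem_ub hg.2.1
    refine le_trans ?_ (le_max_right _ _)
    have hinv : ((b:ℝ)-1) * ((b:ℝ)-1)⁻¹ = 1 := mul_inv_cancel₀ (by linarith)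
    rw [pow_zero, mul_one, le_div_iff₀ (by linarith)]
    nlinarith
  | succ n ih =>
    intro a β hg
    rcases dichot hb hg with ⟨j, hj1, hj2, ha, hβ⟩ | ⟨j, hj1, hj2, a', β', hg', ha, hβ⟩
    · refine le_trans ?_ (le_max_left _ _)
      rw [ha, hβ, Lp_succ_eq hb]
      linarith
    · have hIH := ih a' β' hg'
      have hbpos : (0:ℝ) < b := by linarith
      have hstep : β - a = (β' - a')/b := by
        rw [ha, hβ, div_sub_div_same]; ring_nf
      rw [hstep]
      rcases le_max_iff.mp hIH with h | h
      · refine le_trans ?_ (le_max_left _ _)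
        have h1 : (β' - a')/b ≤ gp b / b := div_le_div_r h hbpos
        have h2 : gp b / b ≤ gp b := by
          rw [div_le_iff₀ hbpos]
          nlinarith [gp_pos hb]
        linarith
      · refine le_trans ?_ (le_max_right _ _)
        have h1 : (β' - a')/b ≤ (((b:ℝ)-2)/(((b:ℝ)-1) * (b:ℝ)^n)) / b := div_le_div_r h hbpos
        have h2 : (((b:ℝ)-2)/(((b:ℝ)-1) * (b:ℝ)^n)) / b
            = ((b:ℝ)-2)/(((b:ℝ)-1) * (b:ℝ)^(n+1)) := by
          rw [div_div, mul_assoc, ← pow_succ]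
        rw [h2] at h1
        exact h1


lemma gap_le (hb : 3 ≤ b) {a β : ℝ} (hg : IsGap (Cb0 b) a β) : β - a ≤ gp b := by
  have hB := hB3 hb
  have hl : 0 < β - a := by linarith [hg.2.2.1]
  obtain ⟨n, hn⟩ := pow_unbounded_of_one_lt ((((b:ℝ)-2)/((b:ℝ)-1)) / (β - a))
    (by linarith : (1:ℝ) < (b:ℝ))
  have hpow := pow_pos (by linarith : (0:ℝ) < (b:ℝ)) n
  have hRn : ((b:ℝ)-2)/(((b:ℝ)-1) * (b:ℝ)^n) < β - a := by
    rw [div_lt_iff₀ (by nlinarith : (0:ℝ) < ((b:ℝ)-1) * (b:ℝ)^n)]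
    rw [div_lt_iff₀ hl, div_lt_iff₀ (show (0:ℝ) < (b:ℝ)-1 by linarith)] at hn
    nlinarith [hn]
  rcases le_max_iff.mp (gap_le_aux hb n a β hg) with h | h
  · exact h
  · linarith


lemma sInf_C (hb : 3 ≤ b) : sInf (Cb0 b) = ((b:ℝ) - 1)⁻¹ :=
  IsLeast.csInf_eq ⟨inv_mem hb, fun _ hx => mem_lb hb hx⟩

lemma sSup_C (hb : 3 ≤ b) : sSup (Cb0 b) = 1 :=
  IsGreatest.csSup_eq ⟨one_mem hb, fun _ hx => mem_ub hx⟩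

lemma gp_id (hb : 3 ≤ b) : ((b:ℝ) - 1) * gp b = 1/(b:ℝ) := by
  have h := hB3 hb
  have h1 : ((b:ℝ) - 1) ≠ 0 := by linarith
  have h2 : (b:ℝ) ≠ 0 := by linarith
  rw [gp, mul_inv]
  field_simp

lemma gap_not_small (hb : 3 ≤ b) {c d : ℝ} (hg : IsGap (Cb0 b) c d) (hlen : gp b ≤ d - c) :
    ∃ k : ℕ, 1 ≤ k ∧ k ≤ b - 2 ∧ c = ((k:ℝ)+1)/b ∧ d = Lp b (k+1) := by
  have hB := hB3 hb
  rcases dichot hb hg with h | ⟨k, hk1, hk2, c', d', hg', hc, hd⟩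
  · exact h
  · exfalso
    have h1 : d' - c' ≤ gp b := gap_le hb hg'
    have h2 : d - c = (d' - c')/b := by rw [hc, hd, div_sub_div_same]; ring_nf
    have h3 : (d' - c')/b ≤ gp b / b := div_le_div_r h1 (by linarith)
    have h4 : gp b / b < gp b := by
      rw [div_lt_iff₀ (by linarith : (0:ℝ) < (b:ℝ))]
      nlinarith [gp_pos hb]
    linarith

lemma unscale_lt {x y : ℝ} {j : ℕ} (hb : 3 ≤ b) (h : (x + j)/(b:ℝ) < (y + j)/b) : x < y := by
  have hB := hB3 hb
  rw [div_lt_div_iff₀ (by linarith) (by linarith)] at h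
  nlinarith

lemma unscale_le {x y : ℝ} {j : ℕ} (hb : 3 ≤ b) (h : (x + j)/(b:ℝ) ≤ (y + j)/b) : x ≤ y := by
  have hB := hB3 hb
  rw [div_le_div_iff₀ (by linarith) (by linarith)] at h
  nlinarith

lemma gap_unscale (hb : 3 ≤ b) {c d : ℝ} (hcd : IsGap (Cb0 b) c d) {j : ℕ} (hj1 : 1 ≤ j)
    (hj2 : j ≤ b - 1) (hlo : Lp b j ≤ c) (hhi : d ≤ ((j:ℝ)+1)/b) :
    ∃ c' d', IsGap (Cb0 b) c' d' ∧ c = (c' + j)/b ∧ d = (d' + j)/b := by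
  have hB := hB3 hb
  obtain ⟨hcC, hdC, hlt, hemp⟩ := hcd
  obtain ⟨c', hc'C, rfl⟩ := mem_child hb hcC hj1 hj2 hlo (le_trans hlt.le hhi)
  obtain ⟨d', hd'C, rfl⟩ := mem_child hb hdC hj1 hj2 (le_trans hlo hlt.le) hhi
  have hlt' : c' < d' := unscale_lt hb hlt
  refine ⟨c', d', ⟨hc'C, hd'C, hlt', ?_⟩, rfl, rfl⟩
  rw [eq_empty_iff_forall_notMem]
  rintro w ⟨⟨hw1, hw2⟩, hwC⟩
  exact (eq_empty_iff_forall_notMem.mp hemp) ((w + j)/b)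
    ⟨⟨div_lt_div_r (by linarith) (by linarith), div_lt_div_r (by linarith) (by linarith)⟩,
      scale_mem hb hwC hj1 hj2⟩

lemma top_left (hb : 3 ≤ b) (j : ℕ) :
    ((j:ℝ)+1)/b - ((b:ℝ)-2) * (Lp b (j+1) - ((j:ℝ)+1)/b) = Lp b j := by
  have hB := hB3 hb
  have h1 := gp_id hb
  rw [Lp_succ_eq hb, Lp_eq hb]
  have : ((j:ℝ)+1)/b = (j:ℝ)/b + 1/b := by rw [← add_div]
  rw [this]
  linarith [gp_id hb]

lemma top_right (hb : 3 ≤ b) (j : ℕ) :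
    Lp b (j+1) + ((b:ℝ)-2) * (Lp b (j+1) - ((j:ℝ)+1)/b) = ((j:ℝ)+2)/b := by
  have hB := hB3 hb
  have h1 := gp_id hb
  rw [Lp_succ_eq hb]
  have h2 : ((j:ℝ)+2)/b = ((j:ℝ)+1)/b + 1/b := by rw [← add_div]; ring_nf
  rw [h2]
  nlinarith [gp_pos hb]


lemma top_case (hb : 3 ≤ b) {j : ℕ} (hj1 : 1 ≤ j) (hj2 : j ≤ b - 2) :
    IsGreatest (insert (sInf (Cb0 b)) (Dset (Cb0 b) (((j:ℝ)+1)/b) (Lp b (j+1)))) (Lp b j) ∧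
    IsLeast (insert (sSup (Cb0 b)) (Eset (Cb0 b) (((j:ℝ)+1)/b) (Lp b (j+1)))) (((j:ℝ)+2)/b) := by
  have hB := hB3 hb
  have hglen : Lp b (j+1) - ((j:ℝ)+1)/b = gp b := by rw [Lp_succ_eq hb]; ring
  have hginv := gp_lt_invb hb
  have hgpos := gp_pos hb
  constructor
  · constructor
    · -- membership of Lp b j
      rcases Nat.lt_or_ge j 2 with h2 | h2
      · -- j = 1
        have hj : j = 1 := by omega
        subst hj
        rw [sInf_C hb, Lp_one hb]
        exact mem_insert _ _
      · -- j ≥ 2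
        obtain ⟨m, rfl⟩ : ∃ m, j = m + 1 := ⟨j - 1, by omega⟩
        refine mem_insert_of_mem _ ?_
        have hgap := top_gap hb (show 1 ≤ m by omega) (show m ≤ b - 2 by omega)
        refine ⟨((m:ℝ)+1)/b, hgap.1, hgap.2.1, hgap.2.2.1, ?_, ?_, hgap.2.2.2⟩
        · -- Lp b (m+1) ≤ (m+1+1)/b
          rw [Lp_succ_eq hb]
          have : ((m:ℝ)+1+1)/b = ((m:ℝ)+1)/b + 1/b := by rw [← add_div]
          push_cast
          rw [this]
          push_cast
          linarith
        · rw [hglen, Lp_succ_eq hb]; push_cast; linarith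
    · -- upper bound
      rintro x hx
      rcases mem_insert_iff.mp hx with rfl | ⟨c, hcC, hxC, hcx, hxa, hlen, hemp⟩
      · rw [sInf_C hb, ← Lp_one hb]
        exact Lp_mono hb hj1
      · rw [hglen] at hlen
        obtain ⟨k, hk1, hk2, rfl, rfl⟩ := gap_not_small hb ⟨hcC, hxC, hcx, hemp⟩ hlen
        have hkj : k + 1 ≤ j := by
          by_contra hcon
          have h3 : j + 1 ≤ k + 1 := by omega
          have h4 : Lp b (j+1) ≤ Lp b (k+1) := Lp_mono hb h3
          have h5 := right_lt_Lp_succ hb j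
          linarith
        exact Lp_mono hb hkj
  · constructor
    · -- membership of (j+2)/b
      rcases Nat.lt_or_ge j (b - 2) with h2 | h2
      · -- j ≤ b - 3 : interior
        refine mem_insert_of_mem _ ?_
        have hgap := top_gap hb (show 1 ≤ j + 1 by omega) (show j + 1 ≤ b - 2 by omega)
        have e1 : ((j:ℝ)+2)/b = ((((j:ℕ)+1 : ℕ):ℝ)+1)/b := by push_cast; ring_nf
        rw [e1]
        refine ⟨Lp b (j+1+1), hgap.1, hgap.2.1, hgap.2.2.1, ?_, ?_, hgap.2.2.2⟩
        · have h6 := Lp_succ_eq hb j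
          have e : ((j:ℝ)+1+1)/b - ((j:ℝ)+1)/b = 1/b := by rw [div_sub_div_same]; ring_nf
          push_cast
          linarith
        · rw [hglen]
          have h6 := Lp_succ_eq hb (j+1)
          push_cast at h6 ⊢
          linarith
      · -- j = b - 2 : (j+2)/b = 1
        have hj : j = b - 2 := by omega
        have hcast : (j:ℝ) = (b:ℝ) - 2 := by
          subst hj
          push_cast [Nat.cast_sub (show 2 ≤ b by omega)]
          ring
        have : ((j:ℝ)+2)/b = 1 := by
          rw [hcast, div_eq_one_iff_eq (by linarith : (b:ℝ) ≠ 0)]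
          ring
        rw [this, sSup_C hb]
        exact mem_insert _ _
    · -- lower bound
      rintro x hx
      rcases mem_insert_iff.mp hx with rfl | ⟨d, hxC, hdC, hxd, hβx, hlen, hemp⟩
      · rw [sSup_C hb]
        have hcast : (j:ℝ) ≤ (b:ℝ) - 2 := by
          have : ((j:ℕ):ℝ) ≤ ((b - 2 : ℕ):ℝ) := by exact_mod_cast hj2
          rwa [Nat.cast_sub (show 2 ≤ b by omega)] at this
        rw [div_le_one (by linarith : (0:ℝ) < (b:ℝ))]
        linarith
      · rw [hglen] at hlen
        obtain ⟨k, hk1, hk2, rfl, rfl⟩ := gap_not_small hb ⟨hxC, hdC, hxd, hemp⟩ hlen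
        have h5 := right_lt_Lp_succ hb j
        have hjk : j + 1 ≤ k := by
          by_contra hcon
          have h3 : k ≤ j := by omega
          have h4 : ((k:ℝ)+1)/b ≤ ((j:ℝ)+1)/b := by
            have : (k:ℝ) ≤ j := by exact_mod_cast h3
            exact div_le_div_r (by linarith) (by linarith)
          linarith
        have : (j:ℝ) + 1 ≤ (k:ℝ) := by exact_mod_cast hjk
        exact div_le_div_r (by linarith) (by linarith)


lemma cast_le_bsub1 (hb : 3 ≤ b) {j : ℕ} (h : j ≤ b - 1) : (j:ℝ) ≤ (b:ℝ) - 1 := by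
  have : ((j:ℕ):ℝ) ≤ ((b - 1 : ℕ):ℝ) := by exact_mod_cast h
  rwa [Nat.cast_sub (show 1 ≤ b by omega), Nat.cast_one] at this

lemma master (hb : 3 ≤ b) : ∀ n : ℕ, ∀ a β : ℝ, IsGap (Cb0 b) a β → gp b ≤ (β - a) * (b:ℝ)^n →
    IsGreatest (insert (sInf (Cb0 b)) (Dset (Cb0 b) a β)) (a - ((b:ℝ)-2)*(β-a)) ∧
    IsLeast (insert (sSup (Cb0 b)) (Eset (Cb0 b) a β)) (β + ((b:ℝ)-2)*(β-a)) := by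
  have hB := hB3 hb
  have hbpos : (0:ℝ) < b := by linarith
  have hbne : (b:ℝ) ≠ 0 := by linarith
  intro n
  induction n with
  | zero =>
    intro a β hg hlen
    rw [pow_zero, mul_one] at hlen
    obtain ⟨j, hj1, hj2, rfl, rfl⟩ := gap_not_small hb hg hlen
    rw [top_left hb j, top_right hb j]
    exact top_case hb hj1 hj2
  | succ n ih =>
    intro a β hg hlen
    rcases dichot hb hg with ⟨j, hj1, hj2, rfl, rfl⟩ | ⟨j, hj1, hj2, a', β', hg', rfl, rfl⟩
    · rw [top_left hb j, top_right hb j]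
      exact top_case hb hj1 hj2
    · -- scaled case
      have hstep : (β' + j)/(b:ℝ) - (a' + j)/b = (β' - a')/b := by
        rw [div_sub_div_same]; ring_nf
      have hlen' : gp b ≤ (β' - a') * (b:ℝ)^n := by
        rw [hstep] at hlen
        rw [pow_succ] at hlen
        have e : (β' - a')/(b:ℝ) * ((b:ℝ)^n * b) = (β' - a') * (b:ℝ)^n := by
          field_simp
        linarith [e ▸ hlen]
      obtain ⟨Hg', Hl'⟩ := ih a' β' hg' hlen'
      set x0' := a' - ((b:ℝ)-2)*(β' - a') with hx0'def
      set x1' := β' + ((b:ℝ)-2)*(β' - a') with hx1'def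
      have hlow' : ((b:ℝ)-1)⁻¹ ≤ x0' := by
        have := Hg'.2 (mem_insert _ _); rwa [sInf_C hb] at this
      have hup' : x1' ≤ 1 := by
        have := Hl'.2 (mem_insert _ _); rwa [sSup_C hb] at this
      have hx0 : (a'+j)/(b:ℝ) - ((b:ℝ)-2)*((β'+j)/b - (a'+j)/b) = (x0' + j)/b := by
        rw [hstep, hx0'def]; field_simp; ring
      have hx1 : (β'+j)/(b:ℝ) + ((b:ℝ)-2)*((β'+j)/b - (a'+j)/b) = (x1' + j)/b := by
        rw [hstep, hx1'def]; field_simp; ring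
      have hLa : Lp b j ≤ (a'+j)/(b:ℝ) := (scale_bounds hb hg'.1).1
      have haR : (a'+j)/(b:ℝ) ≤ ((j:ℝ)+1)/b := (scale_bounds hb hg'.1).2
      have hLβ : Lp b j ≤ (β'+j)/(b:ℝ) := (scale_bounds hb hg'.2.1).1
      have hβR : (β'+j)/(b:ℝ) ≤ ((j:ℝ)+1)/b := (scale_bounds hb hg'.2.1).2
      have hLpx0 : Lp b j ≤ (x0' + j)/(b:ℝ) := by
        rw [Lp, add_comm ((j:ℝ))]
        exact div_le_div_r (by linarith) hbpos
      have hglen : β' - a' > 0 := by linarith [hg'.2.2.1]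
      have hgaplen : (β'+j)/(b:ℝ) - (a'+j)/b ≤ gp b := gap_le hb hg
      rw [hx0, hx1]
      constructor
      · constructor
        · -- membership of (x0'+j)/b
          rcases mem_insert_iff.mp Hg'.1 with he | hD
          · -- x0' is sInf C
            rw [sInf_C hb] at he
            have hv : (x0' + j)/(b:ℝ) = Lp b j := by rw [he, Lp, add_comm ((j:ℝ))]
            rcases Nat.lt_or_ge j 2 with h2 | h2
            · have hj : j = 1 := by omega
              subst hj
              rw [hv, Lp_one hb, ← sInf_C hb]
              exact mem_insert _ _
            · obtain ⟨m, rfl⟩ : ∃ m, j = m + 1 := ⟨j - 1, by omega⟩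
              refine mem_insert_of_mem _ ?_
              have hgap := top_gap hb (show 1 ≤ m by omega) (show m ≤ b - 2 by omega)
              rw [hv]
              refine ⟨((m:ℝ)+1)/b, hgap.1, hgap.2.1, hgap.2.2.1, hLa, ?_, hgap.2.2.2⟩
              have e : Lp b (m+1) - ((m:ℝ)+1)/b = gp b := by rw [Lp_succ_eq hb]; ring
              rw [e]
              exact hgaplen
          · -- x0' in Dset a' β'
            obtain ⟨c', hc'C, hx0'C, hcx', hda', hlen'', hemp'⟩ := hD
            refine mem_insert_of_mem _ ?_
            have hgap2 := gap_scale hb ⟨hc'C, hx0'C, hcx', hemp'⟩ hj1 hj2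
            refine ⟨(c'+j)/b, hgap2.1, hgap2.2.1, hgap2.2.2.1, ?_, ?_, hgap2.2.2.2⟩
            · exact div_le_div_r (by linarith) hbpos
            · have e2 : (x0'+j)/(b:ℝ) - (c'+j)/b = (x0'-c')/b := by
                rw [div_sub_div_same]; ring_nf
              rw [hstep, e2]
              exact div_le_div_r (by linarith) hbpos
        · -- upper bound
          rintro x hx
          rcases mem_insert_iff.mp hx with rfl | ⟨c, hcC, hxC, hcx, hxa, hlenx, hemp⟩
          · rw [sInf_C hb]
            have h1 : ((b:ℝ)-1)⁻¹ ≤ Lp b j := by rw [← Lp_one hb]; exact Lp_mono hb hj1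
            linarith
          · have hgapx : IsGap (Cb0 b) c x := ⟨hcC, hxC, hcx, hemp⟩
            rcases le_or_gt x (Lp b j) with h | h
            · linarith
            · have hcLp : Lp b j ≤ c := by
                by_contra hcon
                push_neg at hcon
                exact (eq_empty_iff_forall_notMem.mp hemp) (Lp b j)
                  ⟨⟨hcon, h⟩, Lp_mem hb hj1 hj2⟩
              have hxR : x ≤ ((j:ℝ)+1)/b := le_trans hxa haR
              obtain ⟨c₀, x₀, hg₀, rfl, rfl⟩ := gap_unscale hb hgapx hj1 hj2 hcLp hxR
              have h1 : x₀ ≤ a' := unscale_le hb hxa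
              have h2 : β' - a' ≤ x₀ - c₀ := by
                rw [hstep] at hlenx
                have e2 : (x₀+j)/(b:ℝ) - (c₀+j)/b = (x₀-c₀)/b := by
                  rw [div_sub_div_same]; ring_nf
                rw [e2, div_le_div_iff₀ hbpos hbpos] at hlenx
                nlinarith
              have hmem' : x₀ ∈ Dset (Cb0 b) a' β' :=
                ⟨c₀, hg₀.1, hg₀.2.1, hg₀.2.2.1, h1, h2, hg₀.2.2.2⟩
              have h3 := Hg'.2 (mem_insert_of_mem _ hmem')
              exact div_le_div_r (by linarith) hbpos
      · constructor
        · -- membership of (x1'+j)/b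
          rcases mem_insert_iff.mp Hl'.1 with he | hE
          · rw [sSup_C hb] at he
            have hv : (x1' + j)/(b:ℝ) = ((j:ℝ)+1)/b := by rw [he, add_comm 1 ((j:ℝ))]
            rcases Nat.lt_or_ge j (b-1) with h2 | h2
            · -- j ≤ b - 2
              refine mem_insert_of_mem _ ?_
              have hgap := top_gap hb hj1 (show j ≤ b - 2 by omega)
              rw [hv]
              refine ⟨Lp b (j+1), hgap.1, hgap.2.1, hgap.2.2.1, hβR, ?_, hgap.2.2.2⟩
              have e : Lp b (j+1) - ((j:ℝ)+1)/b = gp b := by rw [Lp_succ_eq hb]; ring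
              rw [e]
              exact hgaplen
            · -- j = b - 1
              have hj : j = b - 1 := by omega
              have hcast : (j:ℝ) = (b:ℝ) - 1 := by
                subst hj
                rw [Nat.cast_sub (show 1 ≤ b by omega), Nat.cast_one]
              have hone : ((j:ℝ)+1)/b = 1 := by
                rw [hcast, div_eq_one_iff_eq hbne]; ring
              rw [hv, hone, ← sSup_C hb]
              exact mem_insert _ _
          · obtain ⟨d', hx1'C, hd'C, hcd', hβ'le, hlen'', hemp'⟩ := hE
            refine mem_insert_of_mem _ ?_
            have hgap2 := gap_scale hb ⟨hx1'C, hd'C, hcd', hemp'⟩ hj1 hj2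
            refine ⟨(d'+j)/b, hgap2.1, hgap2.2.1, hgap2.2.2.1, ?_, ?_, hgap2.2.2.2⟩
            · exact div_le_div_r (by linarith) hbpos
            · have e2 : (d'+j)/(b:ℝ) - (x1'+j)/b = (d'-x1')/b := by
                rw [div_sub_div_same]; ring_nf
              rw [hstep, e2]
              exact div_le_div_r (by linarith) hbpos
        · -- lower bound
          rintro x hx
          rcases mem_insert_iff.mp hx with rfl | ⟨d, hxC, hdC, hxd, hβx, hlenx, hemp⟩
          · rw [sSup_C hb]
            have hjc := cast_le_bsub1 hb hj2
            rw [div_le_one hbpos]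
            linarith
          · have hgapx : IsGap (Cb0 b) x d := ⟨hxC, hdC, hxd, hemp⟩
            rcases le_or_gt (((j:ℝ)+1)/b) x with h | h
            · have h1 : (x1' + j)/(b:ℝ) ≤ ((j:ℝ)+1)/b := by
                apply le_trans (div_le_div_r (by linarith : x1' + (j:ℝ) ≤ 1 + j) hbpos)
                rw [add_comm]
              linarith
            · have hdR : d ≤ ((j:ℝ)+1)/b := by
                by_contra hcon
                push_neg at hcon
                exact (eq_empty_iff_forall_notMem.mp hemp) (((j:ℝ)+1)/b)
                  ⟨⟨h, hcon⟩, right_mem hb hj1 hj2⟩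
              have hxLp : Lp b j ≤ x := le_trans hLβ hβx
              obtain ⟨x₀, d₀, hg₀, rfl, rfl⟩ := gap_unscale hb hgapx hj1 hj2 hxLp hdR
              have h1 : β' ≤ x₀ := unscale_le hb hβx
              have h2 : β' - a' ≤ d₀ - x₀ := by
                rw [hstep] at hlenx
                have e2 : (d₀+j)/(b:ℝ) - (x₀+j)/b = (d₀-x₀)/b := by
                  rw [div_sub_div_same]; ring_nf
                rw [e2, div_le_div_iff₀ hbpos hbpos] at hlenx
                nlinarith
              have hmem' : x₀ ∈ Eset (Cb0 b) a' β' :=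
                ⟨d₀, hg₀.1, hg₀.2.1, hg₀.2.2.1, h1, h2, hg₀.2.2.2⟩
              have h3 := Hl'.2 (mem_insert_of_mem _ hmem')
              exact div_le_div_r (by linarith) hbpos


lemma quotval (hb : 3 ≤ b) {a β : ℝ} (hg : IsGap (Cb0 b) a β) :
    min (a - sSup (insert (sInf (Cb0 b)) (Dset (Cb0 b) a β)))
        (sInf (insert (sSup (Cb0 b)) (Eset (Cb0 b) a β)) - β) / (β - a) = (b:ℝ) - 2 := by
  have hB := hB3 hb
  have hl : 0 < β - a := by linarith [hg.2.2.1]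
  obtain ⟨n, hn⟩ := pow_unbounded_of_one_lt (gp b / (β - a)) (by linarith : (1:ℝ) < (b:ℝ))
  have hn' : gp b ≤ (β - a) * (b:ℝ)^n := by
    rw [div_lt_iff₀ hl] at hn
    nlinarith
  obtain ⟨Hg, Hl⟩ := master hb n a β hg hn'
  rw [Hg.csSup_eq, Hl.csInf_eq,
    show a - (a - ((b:ℝ)-2)*(β-a)) = ((b:ℝ)-2)*(β-a) from by ring,
    show (β + ((b:ℝ)-2)*(β-a)) - β = ((b:ℝ)-2)*(β-a) from by ring,
    min_self, mul_div_assoc, div_self (ne_of_gt hl), mul_one]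


end CbAux

theorem thickness_Cb0 (b : ℕ) (hb : 3 ≤ b) :
    thickness (Cb0 b) = (b : ℝ) - 2 := by
  have hB := CbAux.hB3 hb
  rw [thickness]
  have hset : { t : ℝ | ∃ a β : ℝ, a ∈ Cb0 b ∧ β ∈ Cb0 b ∧ a < β ∧ Set.Ioo a β ∩ Cb0 b = ∅ ∧
      t = min
        (a - sSup (insert (sInf (Cb0 b))
          {d : ℝ | ∃ c : ℝ, c ∈ Cb0 b ∧ d ∈ Cb0 b ∧ c < d ∧ d ≤ a ∧ β - a ≤ d - c ∧
            Set.Ioo c d ∩ Cb0 b = ∅}))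
        (sInf (insert (sSup (Cb0 b))
          {c : ℝ | ∃ d : ℝ, c ∈ Cb0 b ∧ d ∈ Cb0 b ∧ c < d ∧ β ≤ c ∧ β - a ≤ d - c ∧
            Set.Ioo c d ∩ Cb0 b = ∅}) - β)
        / (β - a) } = {(b:ℝ) - 2} := by
    apply Set.eq_singleton_iff_unique_mem.mpr
    constructor
    · -- membership via the top-level gap j = 1
      have hgap := CbAux.top_gap hb (le_refl 1) (show 1 ≤ b - 2 by omega)
      exact ⟨_, _, hgap.1, hgap.2.1, hgap.2.2.1, hgap.2.2.2, (CbAux.quotval hb hgap).symm⟩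
    · rintro t ⟨a, β, h1, h2, h3, h4, rfl⟩
      exact CbAux.quotval hb ⟨h1, h2, h3, h4⟩
  rw [hset, csInf_singleton]
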